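/- arXiv:2003.10636 — 7 statements merged into one kernel-verified Lean document; each statement's English description precedes it below -/
import Mathlib

section
/- There exists a collection of N = 2^(n^(1/4)) subsets of [n], each of size √n, such that any two distinct sets in the collection intersect in at most n^(1/4) elements (for all sufficiently large n for which √n and n^(1/4) are integers). -/
open Polynomial Finset

/-- difference polynomial from coefficient vector, no constant term -/
noncomputable def auxPoly {p d : ℕ} [Fact p.Prime] (c : Fin d → ZMod p) : (ZMod p)[X] :=
  ∑ i : Fin d, C (c i) * X ^ (i.val + 1)

lemma auxPoly_natDegree {p d : ℕ} [Fact p.Prime] (c : Fin d → ZMod p) :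
    (auxPoly c).natDegree ≤ d := by
  refine (natDegree_sum_le _ _).trans ?_
  simp only [Finset.fold_max_le]
  refine ⟨Nat.zero_le _, fun i _ => ?_⟩
  exact (natDegree_C_mul_le _ _).trans ((natDegree_X_pow _).le.trans (by omega))

lemma auxPoly_coeff {p d : ℕ} [Fact p.Prime] (c : Fin d → ZMod p) (i : Fin d) :
    (auxPoly c).coeff (i.val + 1) = c i := by
  rw [auxPoly, finset_sum_coeff]
  rw [Finset.sum_eq_single i]
  · simp
  · intro j _ hj
    have : ¬((i:ℕ) + 1 = (j:ℕ) + 1) := fun h => hj (Fin.ext (by omega))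
    rw [coeff_C_mul, coeff_X_pow, if_neg this, mul_zero]
  · simp

lemma auxPoly_eval {p d : ℕ} [Fact p.Prime] (c c' : Fin d → ZMod p) (x : ZMod p) :
    (auxPoly (c - c')).eval x = (auxPoly c).eval x - (auxPoly c').eval x := by
  simp [auxPoly, eval_finset_sum, ← Finset.sum_sub_distrib, sub_mul]

/-- key root-counting: for `c ≠ 0` and any target `t`, at most `d` points of `Fin s`
(embedded in `ZMod p`, `s < p`) evaluate to `t`. -/
lemma count_eval_eq {p d s : ℕ} [Fact p.Prime] (hsp : s < p)
    (c : Fin d → ZMod p) (hc : c ≠ 0) (t : ZMod p) :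
    (Finset.univ.filter (fun a : Fin s => (auxPoly c).eval (a.val : ZMod p) = t)).card ≤ d := by
  obtain ⟨i, hi⟩ := Function.ne_iff.mp hc
  have hP : auxPoly c - C t ≠ 0 := by
    intro h
    have : (auxPoly c - C t).coeff (i.val + 1) = 0 := by rw [h]; simp
    rw [coeff_sub, auxPoly_coeff, coeff_C, if_neg (by omega)] at this
    simp only [sub_zero] at this
    exact hi this
  have hdeg : (auxPoly c - C t).natDegree ≤ d :=
    (natDegree_sub_le _ _).trans (by simp [auxPoly_natDegree c])
  set A := Finset.univ.filter (fun a : Fin s => (auxPoly c).eval (a.val : ZMod p) = t) with hA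
  have hinj : Set.InjOn (fun a : Fin s => (a.val : ZMod p)) A := by
    intro a _ b _ hab
    have := congrArg ZMod.val hab
    simp only at this
    rw [ZMod.val_natCast_of_lt (lt_of_lt_of_le a.isLt (le_of_lt hsp)),
      ZMod.val_natCast_of_lt (lt_of_lt_of_le b.isLt (le_of_lt hsp))] at this
    exact Fin.ext this
  have : (A.image (fun a : Fin s => (a.val : ZMod p))).card ≤ d := by
    refine le_trans (Polynomial.card_le_degree_of_subset_roots ?_) hdeg
    intro x hx
    simp only [Finset.mem_val, Finset.mem_image] at hx
    obtain ⟨a, ha, rfl⟩ := hx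
    rw [hA, Finset.mem_filter] at ha
    rw [mem_roots hP]
    simp [IsRoot, ha.2]
  calc A.card = (A.image _).card := (Finset.card_image_of_injOn hinj).symm
    _ ≤ d := this

lemma agree_le {p d s : ℕ} [Fact p.Prime] (hsp : s < p) (hps : p ≤ 2 * s)
    (c c' : Fin d → ZMod p) (hcc : c ≠ c') :
    (Finset.univ.filter (fun a : Fin s =>
      ((auxPoly c).eval (a.val : ZMod p)).val % s
        = ((auxPoly c').eval (a.val : ZMod p)).val % s)).card ≤ 3 * d := by
  have hs0 : 0 < s := by omega
  set D := c - c' with hD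
  have hD0 : D ≠ 0 := sub_ne_zero.mpr hcc
  have hsub : (Finset.univ.filter (fun a : Fin s =>
      ((auxPoly c).eval (a.val : ZMod p)).val % s
        = ((auxPoly c').eval (a.val : ZMod p)).val % s))
      ⊆ (Finset.univ.filter (fun a : Fin s => (auxPoly D).eval (a.val : ZMod p) = 0))
        ∪ (Finset.univ.filter (fun a : Fin s => (auxPoly D).eval (a.val : ZMod p) = (s : ZMod p)))
        ∪ (Finset.univ.filter (fun a : Fin s => (auxPoly D).eval (a.val : ZMod p) = -(s : ZMod p))) := by
    intro a ha
    rw [Finset.mem_filter] at ha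
    have ha2 := ha.2
    set x := (auxPoly c).eval (a.val : ZMod p) with hx
    set y := (auxPoly c').eval (a.val : ZMod p) with hy
    have hxv : x.val < p := ZMod.val_lt x
    have hyv : y.val < p := ZMod.val_lt y
    have hdvd : (s : ℤ) ∣ (y.val : ℤ) - (x.val : ℤ) :=
      (Nat.modEq_iff_dvd (n := s)).mp ha2
    obtain ⟨k, hk⟩ := hdvd
    have hk1 : k < 2 := by nlinarith
    have hk2 : -2 < k := by nlinarith
    have hxy : (auxPoly D).eval (a.val : ZMod p) = x - y := by
      rw [hD]; exact auxPoly_eval c c' _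
    have hcast : x - y = (((x.val : ℤ) - (y.val : ℤ) : ℤ) : ZMod p) := by
      push_cast
      rw [ZMod.natCast_val, ZMod.natCast_val, ZMod.cast_id, ZMod.cast_id]
    interval_cases k
    · -- y - x = -s, so x - y = s
      have : (x.val : ℤ) - (y.val : ℤ) = (s : ℤ) := by omega
      simp only [Finset.mem_union, Finset.mem_filter, Finset.mem_univ, true_and]
      refine Or.inl (Or.inr ?_)
      rw [hxy, hcast, this]; push_cast; ring
    · have : (x.val : ℤ) - (y.val : ℤ) = 0 := by omega
      simp only [Finset.mem_union, Finset.mem_filter, Finset.mem_univ, true_and]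
      refine Or.inl (Or.inl ?_)
      rw [hxy, hcast, this]; push_cast; ring
    · have : (x.val : ℤ) - (y.val : ℤ) = -(s : ℤ) := by omega
      simp only [Finset.mem_union, Finset.mem_filter, Finset.mem_univ, true_and]
      refine Or.inr ?_
      rw [hxy, hcast, this]; push_cast; ring
  calc _ ≤ _ := Finset.card_le_card hsub
    _ ≤ _ := (Finset.card_union_le _ _).trans (add_le_add (Finset.card_union_le _ _) le_rfl)
    _ ≤ 3 * d := by
        have h1 := count_eval_eq hsp D hD0 0
        have h2 := count_eval_eq hsp D hD0 (s : ZMod p)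
        have h3 := count_eval_eq hsp D hD0 (-(s : ZMod p))
        omega

/-- For all sufficiently large `n` for which `√n` and `n^(1/4)` are integers, there exists a
collection of `2^(n^(1/4))` subsets of `[n]`, each of size `√n`, such that any two distinct
sets in the collection intersect in at most `n^(1/4)` elements. -/
theorem stmt_0 :
    ∃ n₀ : ℕ, ∀ n : ℕ, n₀ ≤ n → ∀ s q : ℕ, s * s = n → q * q = s →
      ∃ 𝒮 : Finset (Finset (Fin n)),
        𝒮.card = 2 ^ q ∧
        (∀ S ∈ 𝒮, S.card = s) ∧
        (∀ S ∈ 𝒮, ∀ T ∈ 𝒮, S ≠ T → (S ∩ T).card ≤ q) := by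
  refine ⟨1296, fun n hn s q hs hq => ?_⟩
  have hq6 : 6 ≤ q := by
    by_contra h
    push_neg at h
    have hs25 : s ≤ 25 := by nlinarith
    nlinarith
  have hs0 : 0 < s := by nlinarith
  have hqs : q < s := by nlinarith
  obtain ⟨p, pp, hp1, hp2⟩ := Nat.exists_prime_lt_and_le_two_mul s (by omega)
  haveI := Fact.mk pp
  set d := q / 3 with hd
  have hd1 : 1 ≤ d := by omega
  have h3d : 3 * d ≤ q := by omega
  -- the encoded sets
  let F : (Fin d → ZMod p) → Fin s → Fin s := fun c a =>
    ⟨((auxPoly c).eval (a.val : ZMod p)).val % s, Nat.mod_lt _ hs0⟩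
  let enc : Fin s → Fin s → Fin n := fun a b =>
    ⟨a.val * s + b.val, by nlinarith [a.isLt, b.isLt]⟩
  have enc_inj : ∀ a b a' b', enc a b = enc a' b' → a = a' ∧ b = b' := by
    intro a b a' b' h
    have h' : a.val * s + b.val = a'.val * s + b'.val := congrArg Fin.val h
    have hb := b.isLt; have hb' := b'.isLt
    have hA : a.val = a'.val := by nlinarith [a.isLt, a'.isLt]
    rw [hA] at h'
    exact ⟨Fin.ext hA, Fin.ext (by omega)⟩
  let Sf : (Fin d → ZMod p) → Finset (Fin n) := fun c =>
    Finset.image (fun a => enc a (F c a)) Finset.univ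
  have hSfcard : ∀ c, (Sf c).card = s := by
    intro c
    rw [Finset.card_image_of_injective _ (fun a a' h => (enc_inj _ _ _ _ h).1), Finset.card_univ,
      Fintype.card_fin]
  have hinter : ∀ c c', c ≠ c' → (Sf c ∩ Sf c').card ≤ q := by
    intro c c' hcc
    have hsub : Sf c ∩ Sf c' ⊆ Finset.image (fun a => enc a (F c a))
        (Finset.univ.filter (fun a : Fin s => F c a = F c' a)) := by
      intro x hx
      rw [Finset.mem_inter] at hx
      obtain ⟨a, _, rfl⟩ := Finset.mem_image.mp hx.1
      obtain ⟨a', _, he⟩ := Finset.mem_image.mp hx.2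
      obtain ⟨hae, hFe⟩ := enc_inj _ _ _ _ he
      subst hae
      refine Finset.mem_image.mpr ⟨a', Finset.mem_filter.mpr ⟨Finset.mem_univ _, hFe.symm⟩, rfl⟩
    calc (Sf c ∩ Sf c').card ≤ _ := Finset.card_le_card hsub
      _ ≤ (Finset.univ.filter (fun a : Fin s => F c a = F c' a)).card := Finset.card_image_le
      _ ≤ 3 * d := by
          have := agree_le (s := s) hp1 hp2 c c' hcc
          refine le_trans (le_of_eq ?_) this
          congr 1
          ext a
          simp only [Finset.mem_filter, Finset.mem_univ, true_and, F, Fin.mk.injEq]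
      _ ≤ q := h3d
  have hSne : ∀ c c', c ≠ c' → Sf c ≠ Sf c' := by
    intro c c' hcc he
    have h1 := hinter c c' hcc
    rw [he, Finset.inter_self, hSfcard] at h1
    omega
  -- choose a subfamily of size 2^q
  have hcount : (2 : ℕ) ^ q ≤ (Finset.univ : Finset (Fin d → ZMod p)).card := by
    rw [Finset.card_univ, Fintype.card_fun, ZMod.card, Fintype.card_fin]
    calc (2:ℕ) ^ q ≤ 2 ^ (3 * d + 2) := Nat.pow_le_pow_right (by norm_num) (by omega)
      _ = 4 * 8 ^ d := by rw [pow_succ, pow_succ, pow_mul]; ring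
      _ ≤ 4 ^ d * 8 ^ d := by
          have : (4:ℕ) ≤ 4 ^ d := le_self_pow₀ (by norm_num) (by omega)
          exact Nat.mul_le_mul_right _ this
      _ = 32 ^ d := by rw [← Nat.mul_pow]
      _ ≤ (q * q) ^ d := Nat.pow_le_pow_left (by nlinarith) _
      _ ≤ p ^ d := Nat.pow_le_pow_left (by omega) _
  obtain ⟨T, -, hT⟩ := Finset.exists_subset_card_eq hcount
  refine ⟨T.image Sf, ?_, ?_, ?_⟩
  · rw [Finset.card_image_of_injOn, hT]
    intro c _ c' _ he
    by_contra hcc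
    exact hSne c c' hcc he
  · intro S hS
    obtain ⟨c, -, rfl⟩ := Finset.mem_image.mp hS
    exact hSfcard c
  · intro S hS T' hT' hne
    obtain ⟨c, -, rfl⟩ := Finset.mem_image.mp hS
    obtain ⟨c', -, rfl⟩ := Finset.mem_image.mp hT'
    exact hinter c c' (fun h => hne (by rw [h]))
end

section
/- If S is a fixed √n-subset of [n] and S' is a uniformly random √n-subset of [n], then the probability that |S ∩ S'| > n^(1/4) is less than 1/(n^(1/4))!. -/
-- key arithmetic lemma: (descFactorial s k)^2 ≤ descFactorial (s*s) k for k ≤ s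
lemma desc_sq_le (s : ℕ) : ∀ k, k ≤ s → (s.descFactorial k) ^ 2 ≤ (s * s).descFactorial k := by
  intro k
  induction k with
  | zero => simp
  | succ k ih =>
    intro hk
    rw [Nat.descFactorial_succ, Nat.descFactorial_succ, mul_pow]
    have hks : k ≤ s := le_of_lt hk
    have h1 : (s - k) ^ 2 ≤ s * s - k := by
      obtain ⟨d, rfl⟩ := Nat.exists_eq_add_of_le hks
      have hk2 : k ≤ k * k := by
        cases k with
        | zero => simp
        | succ m => exact Nat.le_mul_of_pos_left _ (Nat.succ_pos m)
      have hcan : k + d - k = d := by omega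
      rw [hcan, sq]
      exact Nat.le_sub_of_add_le (by nlinarith)
    exact Nat.mul_le_mul h1 (ih hks)

/-- If `S` is a fixed `√n`-subset of `[n]` and `S'` a uniformly random `√n`-subset, then
`Pr[|S ∩ S'| > n^(1/4)] < 1/(n^(1/4))!` for all sufficiently large `n` (with `√n`, `n^(1/4)`
integers). -/
theorem stmt_2 :
    ∃ n₀ : ℕ, ∀ n : ℕ, n₀ ≤ n → ∀ s q : ℕ, s * s = n → q * q = s →
      ∀ S : Finset (Fin n), S.card = s →
        (((Finset.powersetCard s (Finset.univ : Finset (Fin n))).filter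
            (fun S' => q < (S ∩ S').card)).card : ℝ) / (n.choose s : ℝ) <
          1 / (Nat.factorial q : ℝ) := by
  refine ⟨2, fun n hn s q hs hq S hS => ?_⟩
  -- basic facts
  have hs2 : 2 ≤ s := by nlinarith
  have hq2 : 2 ≤ q := by nlinarith
  have hq1s : q + 1 ≤ s := by nlinarith
  have hsn : s ≤ n := by nlinarith
  set num := ((Finset.powersetCard s (Finset.univ : Finset (Fin n))).filter
      (fun S' => q < (S ∩ S').card)).card with hnum
  -- Step A: num ≤ C(s, q+1) * C(n - (q+1), s - (q+1))
  have stepA : num ≤ s.choose (q+1) * (n - (q+1)).choose (s - (q+1)) := by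
    have hsub : (Finset.powersetCard s (Finset.univ : Finset (Fin n))).filter
        (fun S' => q < (S ∩ S').card) ⊆
        (S.powersetCard (q+1)).biUnion
          (fun T => (Finset.powersetCard s (Finset.univ : Finset (Fin n))).filter
            (fun S' => T ⊆ S')) := by
      intro S' hS'
      simp only [Finset.mem_filter, Finset.mem_powersetCard] at hS'
      obtain ⟨⟨_, hcard⟩, hinter⟩ := hS'
      obtain ⟨T, hT1, hT2⟩ := Finset.exists_subset_card_eq hinter
      simp only [Finset.mem_biUnion, Finset.mem_powersetCard, Finset.mem_filter]
      exact ⟨T, ⟨hT1.trans Finset.inter_subset_left, hT2⟩,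
        ⟨⟨Finset.subset_univ _, hcard⟩, hT1.trans Finset.inter_subset_right⟩⟩
    calc num ≤ ((S.powersetCard (q+1)).biUnion
          (fun T => (Finset.powersetCard s (Finset.univ : Finset (Fin n))).filter
            (fun S' => T ⊆ S'))).card := Finset.card_le_card hsub
      _ ≤ ∑ T ∈ S.powersetCard (q+1),
          ((Finset.powersetCard s (Finset.univ : Finset (Fin n))).filter
            (fun S' => T ⊆ S')).card := Finset.card_biUnion_le
      _ ≤ ∑ T ∈ S.powersetCard (q+1), (n - (q+1)).choose (s - (q+1)) := by
          apply Finset.sum_le_sum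
          intro T hT
          rw [Finset.mem_powersetCard] at hT
          obtain ⟨hTS, hTcard⟩ := hT
          -- count supersets of T of size s: bijection with subsets of univ \ T of size s - (q+1)
          have : ((Finset.powersetCard s (Finset.univ : Finset (Fin n))).filter
              (fun S' => T ⊆ S')).card =
              ((Finset.univ \ T).powersetCard (s - (q+1))).card := by
            apply Finset.card_nbij' (fun S' => S' \ T) (fun A => A ∪ T)
            · intro S' hS'
              simp only [Finset.mem_coe, Finset.mem_filter, Finset.mem_powersetCard] at hS' ⊢
              obtain ⟨⟨_, hc⟩, hTs⟩ := hS'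
              refine ⟨Finset.sdiff_subset_sdiff (Finset.subset_univ _) le_rfl, ?_⟩
              rw [Finset.card_sdiff_of_subset hTs, hc, hTcard]
            · intro A hA
              simp only [Finset.mem_coe, Finset.mem_powersetCard, Finset.mem_filter] at hA ⊢
              obtain ⟨hAsub, hAcard⟩ := hA
              have hdisj : Disjoint A T := by
                exact Finset.disjoint_of_subset_left hAsub Finset.sdiff_disjoint
              refine ⟨⟨Finset.subset_univ _, ?_⟩, Finset.subset_union_right⟩
              rw [Finset.card_union_of_disjoint hdisj, hAcard, hTcard]
              omega
            · intro S' hS'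
              simp only [Finset.mem_coe, Finset.mem_filter, Finset.mem_powersetCard] at hS'
              exact Finset.sdiff_union_of_subset hS'.2
            · intro A hA
              simp only [Finset.mem_coe, Finset.mem_powersetCard] at hA
              have hdisj : Disjoint A T :=
                Finset.disjoint_of_subset_left hA.1 Finset.sdiff_disjoint
              show (A ∪ T) \ T = A
              rw [Finset.union_sdiff_right, Finset.sdiff_eq_self_of_disjoint hdisj]
          rw [this, Finset.card_powersetCard, Finset.card_sdiff_of_subset (Finset.subset_univ T),
            Finset.card_univ, Fintype.card_fin, hTcard]
      _ = s.choose (q+1) * (n - (q+1)).choose (s - (q+1)) := by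
          rw [Finset.sum_const, Finset.card_powersetCard, hS, smul_eq_mul]
  -- Step B: C(s,q+1)*C(n-q-1,s-q-1) * q! < C(n,s)
  have key : Nat.factorial q * (s.choose (q+1)) ^ 2 < n.choose (q+1) := by
    -- multiply both sides by (q+1)!^2... use descFactorial
    have hd : ∀ m : ℕ, m.descFactorial (q+1) = Nat.factorial (q+1) * m.choose (q+1) :=
      fun m => Nat.descFactorial_eq_factorial_mul_choose m (q+1)
    have hdsq : (s.descFactorial (q+1)) ^ 2 ≤ n.descFactorial (q+1) := by
      rw [← hs]; exact desc_sq_le s (q+1) hq1s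
    have hnpos : 0 < n.descFactorial (q+1) := by
      rcases Nat.eq_zero_or_pos (n.descFactorial (q+1)) with h | h
      · rw [Nat.descFactorial_eq_zero_iff_lt] at h; omega
      · exact h
    have hlt : (s.descFactorial (q+1)) ^ 2 < (q+1) * n.descFactorial (q+1) := by
      calc (s.descFactorial (q+1)) ^ 2 ≤ n.descFactorial (q+1) := hdsq
        _ < (q+1) * n.descFactorial (q+1) := by
            have : 1 < q + 1 := by omega
            exact (Nat.lt_mul_iff_one_lt_left hnpos).mpr this
    rw [hd, hd] at hlt
    have hfq : Nat.factorial (q+1) = (q+1) * Nat.factorial q := Nat.factorial_succ q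
    rw [mul_pow, hfq] at hlt
    -- hlt : ((q+1) * q! * choose)^2 < (q+1) * ((q+1) * q! * C(n,q+1))
    have hqpos : 0 < q + 1 := by omega
    have hfpos : 0 < Nat.factorial q := Nat.factorial_pos q
    nlinarith [Nat.factorial_pos q, sq_nonneg (s.choose (q+1))]
  have hMpos : 0 < (n - (q+1)).choose (s - (q+1)) :=
    Nat.choose_pos (by omega)
  have hCspos : 0 < s.choose (q+1) := Nat.choose_pos hq1s
  have hCnspos : 0 < n.choose s := Nat.choose_pos hsn
  have hid : n.choose s * s.choose (q+1) = n.choose (q+1) * (n - (q+1)).choose (s - (q+1)) :=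
    Nat.choose_mul hq1s
  have stepB : s.choose (q+1) * (n - (q+1)).choose (s - (q+1)) * Nat.factorial q < n.choose s := by
    have h1 : (s.choose (q+1) * (n - (q+1)).choose (s - (q+1)) * Nat.factorial q) * s.choose (q+1)
        < n.choose s * s.choose (q+1) := by
      rw [hid]
      calc (s.choose (q+1) * (n - (q+1)).choose (s - (q+1)) * Nat.factorial q) * s.choose (q+1)
          = (Nat.factorial q * (s.choose (q+1))^2) * (n - (q+1)).choose (s - (q+1)) := by ring
        _ < n.choose (q+1) * (n - (q+1)).choose (s - (q+1)) :=
            Nat.mul_lt_mul_of_lt_of_le key le_rfl hMpos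
    exact lt_of_mul_lt_mul_right h1 (le_of_lt hCspos)
  -- combine: num * q! < n.choose s
  have hfinal : num * Nat.factorial q < n.choose s := by
    calc num * Nat.factorial q
        ≤ s.choose (q+1) * (n - (q+1)).choose (s - (q+1)) * Nat.factorial q :=
          Nat.mul_le_mul_right _ stepA
      _ < n.choose s := stepB
  -- to reals
  have hc : (0:ℝ) < (n.choose s : ℝ) := by exact_mod_cast hCnspos
  have hf : (0:ℝ) < (Nat.factorial q : ℝ) := by exact_mod_cast Nat.factorial_pos q
  rw [div_lt_div_iff₀ hc hf]
  have : (num : ℝ) * (Nat.factorial q : ℝ) < (n.choose s : ℝ) := by exact_mod_cast hfinal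
  linarith
end

section
/- Let c = (1+δ)/δ for δ ∈ (0,1) and ε > 0 with εn > 1. Consider n items with item pricing p_i = c^i, and n buyer types where type k (for k = 1,...,n) occurs with probability c^(−k) and has unit-demand values v_k^(k) = ((1+ε)/ε)·c^k for item k and v_j^(k) = (1/ε)·c^k for items j ≠ k. Then each buyer of type k purchases item k under this item pricing, and the expected revenue equals n. -/
/-- In the continuity lower-bound construction with `c = (1+δ)/δ`, item prices `p_i = c^i`,
and type `k` having value `((1+ε)/ε)c^k` for item `k` and `(1/ε)c^k` for items `j ≠ k`:
each type `k` purchases item `k` (item `k` is affordable and strictly utility-maximizing),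
and the expected revenue `Σ_k c^(-k)·c^k` equals `n`. -/
theorem stmt_7 (n : ℕ) (δ ε : ℝ) (hδ : δ ∈ Set.Ioo (0 : ℝ) 1) (hε : 0 < ε)
    (hεn : 1 < ε * n) :
    let c : ℝ := (1 + δ) / δ
    let v : ℕ → ℕ → ℝ := fun k j =>
      if j = k then ((1 + ε) / ε) * c ^ k else (1 / ε) * c ^ k
    (∀ k ∈ Finset.Icc 1 n,
      c ^ k ≤ v k k ∧
      ∀ j ∈ Finset.Icc 1 n, j ≠ k → v k j - c ^ j < v k k - c ^ k) ∧
    ∑ k ∈ Finset.Icc 1 n, (c ^ k)⁻¹ * c ^ k = (n : ℝ) := by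
  obtain ⟨hδ0, hδ1⟩ := hδ
  intro c v
  have hc : 0 < c := div_pos (by linarith) hδ0
  constructor
  · intro k hk
    have hck : 0 < c ^ k := pow_pos hc k
    constructor
    · show c ^ k ≤ v k k
      simp only [v, if_pos rfl]
      have h1 : (1:ℝ) ≤ (1 + ε) / ε := by rw [le_div_iff₀ hε]; linarith
      nlinarith
    · intro j hj hjk
      have hcj : 0 < c ^ j := pow_pos hc j
      show v k j - c ^ j < v k k - c ^ k
      simp only [v, if_pos rfl, if_neg hjk]
      have : (1 + ε) / ε * c ^ k = 1 / ε * c ^ k + c ^ k := by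
        field_simp
      linarith
  · have : ∀ k ∈ Finset.Icc 1 n, (c ^ k)⁻¹ * c ^ k = (1 : ℝ) := fun k _ =>
      inv_mul_cancel₀ (pow_pos hc k).ne'
    rw [Finset.sum_congr rfl this, Finset.sum_const, Nat.card_Icc]
    simp
end

section
/- Let c = (1+δ)/δ for δ ∈ (0,1) and ε > 0. If a single-parameter buyer has value (1/ε)·c^k for every item (for all items simultaneously), with probability c^(−k) for each k = 1,...,n (and value 0 otherwise), then the optimal revenue from any posted bundle price is strictly less than (1+δ)/ε. -/
/-- For a single-parameter buyer with value `(1/ε)c^k` for everything, with probability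
`c^(-k)` for `k = 1, ..., n` (`c = (1+δ)/δ`), every posted bundle price `q > 0` earns
revenue `q · Pr[value ≥ q]` strictly less than `(1+δ)/ε`. -/
theorem stmt_8 (n : ℕ) (δ ε q : ℝ) (hδ : δ ∈ Set.Ioo (0 : ℝ) 1) (hε : 0 < ε)
    (hq : 0 < q) :
    let c : ℝ := (1 + δ) / δ
    q * ∑ k ∈ (Finset.Icc 1 n).filter (fun k => q ≤ (1 / ε) * c ^ k), (c ^ k)⁻¹
      < (1 + δ) / ε := by
  intro c
  obtain ⟨hδ0, hδ1⟩ := hδ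
  have hcdef : c = (1 + δ) / δ := rfl
  have hc1 : (1 : ℝ) < c := by rw [hcdef, lt_div_iff₀ hδ0]; linarith
  have hc0 : (0 : ℝ) < c := lt_trans one_pos hc1
  have hgoalpos : 0 < (1 + δ) / ε := by positivity
  set S := (Finset.Icc 1 n).filter (fun k => q ≤ (1 / ε) * c ^ k) with hSdef
  rcases S.eq_empty_or_nonempty with h | h
  · rw [h]; simpa using hgoalpos
  · set m := S.min' h with hm
    have hmS : m ∈ S := S.min'_mem h
    have hmf := Finset.mem_filter.mp hmS
    have hqm : q ≤ (1 / ε) * c ^ m := hmf.2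
    have hmn : m ≤ n := (Finset.mem_Icc.mp hmf.1).2
    have hsub : S ⊆ Finset.Icc m n := by
      intro k hk
      have hk' := Finset.mem_filter.mp hk
      exact Finset.mem_Icc.mpr ⟨S.min'_le k hk, (Finset.mem_Icc.mp hk'.1).2⟩
    have hsum0 : (0 : ℝ) ≤ ∑ k ∈ S, (c ^ k)⁻¹ :=
      Finset.sum_nonneg fun k _ => by positivity
    have h1 : ∑ k ∈ S, (c ^ k)⁻¹ ≤ ∑ k ∈ Finset.Icc m n, (c ^ k)⁻¹ :=
      Finset.sum_le_sum_of_subset_of_nonneg hsub (fun k _ _ => by positivity)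
    have hrne : c⁻¹ ≠ 1 := by
      have : c⁻¹ < 1 := inv_lt_one_of_one_lt₀ hc1
      linarith
    have hcinv : c⁻¹ = δ / (1 + δ) := by rw [hcdef, inv_div]
    have hsum : ∑ k ∈ Finset.Icc m n, (c ^ k)⁻¹
        = ((c⁻¹) ^ (n + 1) - (c⁻¹) ^ m) / (c⁻¹ - 1) := by
      simp only [← inv_pow]
      rw [← Finset.Ico_add_one_right_eq_Icc, geom_sum_Ico hrne (by omega)]
    have h2 : ∑ k ∈ Finset.Icc m n, (c ^ k)⁻¹ < (c ^ m)⁻¹ * (1 + δ) := by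
      rw [hsum, ← inv_pow]
      have hden : c⁻¹ - 1 < 0 := by
        have : c⁻¹ < 1 := inv_lt_one_of_one_lt₀ hc1
        linarith
      rw [div_lt_iff_of_neg hden]
      have hkey : (1 + δ) * c⁻¹ = δ := by
        rw [hcinv]; field_simp
      have hp1 : (0 : ℝ) < (c⁻¹) ^ (n + 1) := by positivity
      have hp2 : (0 : ℝ) < (c⁻¹) ^ m := by positivity
      nlinarith [hp1, hp2, hkey]
    calc q * ∑ k ∈ S, (c ^ k)⁻¹
        ≤ (1 / ε) * c ^ m * ∑ k ∈ S, (c ^ k)⁻¹ :=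
          mul_le_mul_of_nonneg_right hqm hsum0
      _ ≤ (1 / ε) * c ^ m * ∑ k ∈ Finset.Icc m n, (c ^ k)⁻¹ := by
          apply mul_le_mul_of_nonneg_left h1; positivity
      _ < (1 / ε) * c ^ m * ((c ^ m)⁻¹ * (1 + δ)) := by
          apply mul_lt_mul_of_pos_left h2; positivity
      _ = (1 + δ) / ε := by
          have : (c : ℝ) ^ m ≠ 0 := by positivity
          field_simp
end

section
/- Combining the previous two constructions: for any ε > 0 with εn > 1 and any δ ∈ (0,1), there exists a unit-demand value distribution D over n items and a (1±ε)-multiplicative perturbation D' of D such that the optimal buy-many revenue on D is at least n, while the optimal (even unconstrained) revenue on D' equals (1+δ)/ε. -/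
/-- Value of a unit-demand buyer with item values `v` for a set `S` of items:
`max_{i ∈ S} v i` (and `0` for the empty set). -/
noncomputable def setVal {n : ℕ} (v : Fin n → ℝ) (S : Finset (Fin n)) : ℝ :=
  ((S.image v).max).getD 0

/-- A lottery: a (sub)distribution over subsets of the `n` items together with a price. -/
abbrev Lottery (n : ℕ) := (Finset (Fin n) → ℝ) × ℝ

/-- `ℓ.1` is a probability distribution over subsets of items. -/
def IsLottery {n : ℕ} (ℓ : Lottery n) : Prop :=
  (∀ S, 0 ≤ ℓ.1 S) ∧ ∑ S : Finset (Fin n), ℓ.1 S = 1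

/-- Expected value of a unit-demand buyer with values `v` who currently holds the set `A`
and buys the list `L` of lotteries (independent draws, keeping the union). -/
noncomputable def evVal {n : ℕ} (v : Fin n → ℝ) : Finset (Fin n) → List (Lottery n) → ℝ
  | A, [] => setVal v A
  | A, ℓ :: L => ∑ S : Finset (Fin n), ℓ.1 S * evVal v (A ∪ S) L

/-- Total price of a list of purchased lotteries. -/
noncomputable def listPrice {n : ℕ} (L : List (Lottery n)) : ℝ := (L.map Prod.snd).sum

/-- Utility of a unit-demand buyer with values `v` buying the list `L` of lotteries. -/
noncomputable def listUtility {n : ℕ} (v : Fin n → ℝ) (L : List (Lottery n)) : ℝ :=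
  evVal v ∅ L - listPrice L


lemma setVal_empty {n : ℕ} (v : Fin n → ℝ) : setVal v ∅ = 0 := rfl

lemma setVal_eq_max' {n : ℕ} (v : Fin n → ℝ) {S : Finset (Fin n)} (h : S.Nonempty) :
    setVal v S = (S.image v).max' (h.image v) := by
  unfold setVal
  rw [← Finset.coe_max']
  rfl

lemma le_setVal {n : ℕ} (v : Fin n → ℝ) {S : Finset (Fin n)} {i : Fin n} (hi : i ∈ S) :
    v i ≤ setVal v S := by
  rw [setVal_eq_max' v ⟨i, hi⟩]
  exact Finset.le_max' _ _ (Finset.mem_image_of_mem v hi)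

lemma setVal_le {n : ℕ} (v : Fin n → ℝ) {S : Finset (Fin n)} {m : ℝ} (h0 : 0 ≤ m)
    (h : ∀ i ∈ S, v i ≤ m) : setVal v S ≤ m := by
  rcases S.eq_empty_or_nonempty with rfl | hS
  · simpa [setVal_empty] using h0
  · rw [setVal_eq_max' v hS]
    apply Finset.max'_le
    intro y hy
    obtain ⟨i, hi, rfl⟩ := Finset.mem_image.mp hy
    exact h i hi

lemma setVal_nonneg {n : ℕ} (v : Fin n → ℝ) (hv : ∀ j, 0 ≤ v j) (S : Finset (Fin n)) :
    0 ≤ setVal v S := by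
  rcases S.eq_empty_or_nonempty with rfl | hS
  · simp [setVal_empty]
  · obtain ⟨i, hi⟩ := hS
    exact le_trans (hv i) (le_setVal (v := v) hi)

lemma setVal_const {n : ℕ} (a : ℝ) {S : Finset (Fin n)} (hS : S.Nonempty) :
    setVal (fun _ : Fin n => a) S = a := by
  unfold setVal
  rw [Finset.image_const hS]
  rfl

lemma setVal_singleton {n : ℕ} (v : Fin n → ℝ) (i : Fin n) : setVal v {i} = v i := by
  rw [setVal_eq_max' v ⟨i, Finset.mem_singleton_self i⟩]
  simp

def pm {n : ℕ} (T : Finset (Fin n)) : Finset (Fin n) → ℝ := fun S => if S = T then 1 else 0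

lemma pm_lottery {n : ℕ} (T : Finset (Fin n)) (p : ℝ) : IsLottery ((pm T, p) : Lottery n) := by
  constructor
  · intro S; unfold pm; positivity
  · simp [pm]

lemma sum_pm_mul {n : ℕ} (T : Finset (Fin n)) (f : Finset (Fin n) → ℝ) :
    ∑ S : Finset (Fin n), pm T S * f S = f T := by
  simp [pm, ite_mul]

lemma evVal_pm {n : ℕ} (v : Fin n → ℝ) (A T : Finset (Fin n)) (p : ℝ)
    (L : List (Lottery n)) :
    evVal v A (((pm T, p) : Lottery n) :: L) = evVal v (A ∪ T) L := by
  show (∑ S : Finset (Fin n), pm T S * evVal v (A ∪ S) L) = _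
  rw [sum_pm_mul]

lemma listPrice_nil {n : ℕ} : listPrice ([] : List (Lottery n)) = 0 := rfl

lemma listPrice_cons {n : ℕ} (ℓ : Lottery n) (L : List (Lottery n)) :
    listPrice (ℓ :: L) = ℓ.2 + listPrice L := by simp [listPrice]

lemma util_bound {n : ℕ} (v : Fin n → ℝ) (B : ℝ) (hB : 0 ≤ B)
    (price : Fin n → ℝ) (hp : ∀ j, 0 ≤ price j) (hvB : ∀ j, v j ≤ price j + B)
    (L : List (Lottery n)) (hL : ∀ ℓ ∈ L, ∃ j, ℓ = ((pm {j}, price j) : Lottery n)) :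
    ∀ A, evVal v A L ≤ listPrice L + max (setVal v A) B := by
  induction L with
  | nil =>
    intro A
    show setVal v A ≤ 0 + max (setVal v A) B
    rw [zero_add]
    exact le_max_left _ _
  | cons ℓ L ih =>
    intro A
    obtain ⟨j, rfl⟩ := hL ℓ List.mem_cons_self
    rw [evVal_pm, listPrice_cons]
    have hmax0 : (0:ℝ) ≤ max (setVal v A) B := le_trans hB (le_max_right _ _)
    have key : max (setVal v (A ∪ {j})) B ≤ price j + max (setVal v A) B := by
      apply max_le
      · apply setVal_le v (by linarith [hp j])
        intro i hi
        rcases Finset.mem_union.mp hi with h | h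
        · have := le_setVal v h
          have := le_max_left (setVal v A) B
          linarith [hp j]
        · have : i = j := Finset.mem_singleton.mp h
          subst this
          have := hvB i
          have := le_max_right (setVal v A) B
          linarith
      · have := le_max_right (setVal v A) B
        linarith [hp j]
    have := ih (fun ℓ hℓ => hL ℓ (List.mem_cons_of_mem _ hℓ)) (A ∪ {j})
    calc evVal v (A ∪ {j}) L ≤ listPrice L + max (setVal v (A ∪ {j})) B := this
      _ ≤ listPrice L + (price j + max (setVal v A) B) := by linarith
      _ = ((pm {j}, price j) : Lottery n).2 + listPrice L + max (setVal v A) B := by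
          show _ = price j + _ + _; ring


set_option maxHeartbeats 1000000

/-- For any `ε > 0` with `εn > 1` and `δ ∈ (0,1)`, there is a unit-demand value
distribution `D` over `n` items (types `k = 1, ..., n` with probabilities `prob k`, the
remaining mass on the zero valuation) and a `(1 ± ε)`-multiplicative perturbation `D'` of
`D`, such that the optimal buy-many revenue on `D` is at least `n` (witnessed by a menu and
utility-maximizing multi-purchase behavior), while the optimal unconstrained (IC and IR)
revenue on `D'` equals `(1+δ)/ε`. -/
theorem stmt_9 (n : ℕ) (hn : 1 ≤ n) (ε δ : ℝ) (hδ : δ ∈ Set.Ioo (0 : ℝ) 1)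
    (hε : 0 < ε) (hεn : 1 < ε * n) :
    ∃ (vals vals' : ℕ → Fin n → ℝ) (prob : ℕ → ℝ),
      (∀ k, 0 ≤ prob k) ∧ (∑ k ∈ Finset.Icc 1 n, prob k ≤ 1) ∧
      -- D' is a (1±ε)-multiplicative perturbation of D (under the identity coupling)
      (∀ k ∈ Finset.Icc 1 n, ∀ S : Finset (Fin n),
        (1 - ε) * setVal (vals k) S ≤ setVal (vals' k) S ∧
        setVal (vals' k) S ≤ (1 + ε) * setVal (vals k) S) ∧
      -- the optimal buy-many revenue for D is at least n
      (∃ (M : Set (Lottery n)) (σ : ℕ → List (Lottery n)),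
        (∀ ℓ ∈ M, IsLottery ℓ) ∧
        (∀ k ∈ Finset.Icc 1 n, ∀ ℓ ∈ σ k, ℓ ∈ M) ∧
        (∀ k ∈ Finset.Icc 1 n, ∀ L : List (Lottery n), (∀ ℓ ∈ L, ℓ ∈ M) →
          listUtility (vals k) L ≤ listUtility (vals k) (σ k)) ∧
        (∀ k ∈ Finset.Icc 1 n, 0 ≤ listUtility (vals k) (σ k)) ∧
        (n : ℝ) ≤ ∑ k ∈ Finset.Icc 1 n, prob k * listPrice (σ k)) ∧
      -- the optimal (unconstrained, IC-IR) revenue for D' equals (1+δ)/ε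
      sSup {r : ℝ | ∃ (x : ℕ → Finset (Fin n) → ℝ) (p : ℕ → ℝ),
          (∀ k, IsLottery (x k, p k)) ∧
          (∀ k ∈ Finset.Icc 1 n, ∀ k' ∈ Finset.Icc 1 n,
            (∑ S : Finset (Fin n), x k' S * setVal (vals' k) S) - p k' ≤
            (∑ S : Finset (Fin n), x k S * setVal (vals' k) S) - p k) ∧
          (∀ k ∈ Finset.Icc 1 n,
            0 ≤ (∑ S : Finset (Fin n), x k S * setVal (vals' k) S) - p k) ∧
          r = ∑ k ∈ Finset.Icc 1 n, prob k * p k}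
        = (1 + δ) / ε := by
  obtain ⟨hδ0, hδ1⟩ := hδ
  have hδ' : (0:ℝ) < 1 + δ := by linarith
  set c : ℝ := (1 + δ) / δ with hc_def
  set r : ℝ := δ / (1 + δ) with hr_def
  have hc1 : 1 < c := by rw [hc_def, lt_div_iff₀ hδ0]; linarith
  have hc0 : (0:ℝ) < c := by linarith
  have hr0 : (0:ℝ) < r := div_pos hδ0 hδ'
  have hcr : c * r = 1 := by rw [hc_def, hr_def]; field_simp
  have hrδ : (1 + δ) * r = δ := by rw [hr_def]; field_simp
  -- the distinguished item of type k
  set idx : ℕ → Fin n := fun k => ⟨min (k - 1) (n - 1), by omega⟩ with hidx_def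
  have hidx : ∀ k, 1 ≤ k → k ≤ n → ((idx k : ℕ)) + 1 = k := by
    intro k h1 h2
    show min (k - 1) (n - 1) + 1 = k
    omega
  set vals : ℕ → Fin n → ℝ :=
    fun k i => if (i : ℕ) + 1 = k then ((1 + ε) / ε) * c ^ k else (1 / ε) * c ^ k
    with hvals_def
  set vals' : ℕ → Fin n → ℝ := fun k _ => (1 / ε) * c ^ k with hvals'_def
  set prob : ℕ → ℝ := fun k => if k = n then (1 + δ) * r ^ n else r ^ k with hprob_def
  have hprob0 : ∀ k, 0 ≤ prob k := by
    intro k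
    show 0 ≤ if k = n then (1 + δ) * r ^ n else r ^ k
    split <;> positivity
  -- tail sums of prob
  have Psum : ∀ j, 1 ≤ j → j ≤ n → ∑ k ∈ Finset.Icc j n, prob k = (1 + δ) * r ^ j := by
    have key : ∀ d j, j + d = n → 1 ≤ j →
        ∑ k ∈ Finset.Icc j n, prob k = (1 + δ) * r ^ j := by
      intro d
      induction d with
      | zero =>
        intro j hj _
        have : j = n := by omega
        subst this
        rw [Finset.Icc_self, Finset.sum_singleton]
        show (if j = j then (1 + δ) * r ^ j else r ^ j) = _
        rw [if_pos rfl]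
      | succ d ih =>
        intro j hj h1
        have hjn : j < n := by omega
        have hins : Finset.Icc j n = insert j (Finset.Icc (j + 1) n) := by
          ext a
          simp only [Finset.mem_Icc, Finset.mem_insert]
          omega
        rw [hins, Finset.sum_insert (by simp only [Finset.mem_Icc]; omega)]
        rw [ih (j + 1) (by omega) (by omega)]
        have hpj : prob j = r ^ j := by
          show (if j = n then _ else _) = _
          rw [if_neg (by omega)]
        rw [hpj]
        calc r ^ j + (1 + δ) * r ^ (j + 1) = r ^ j * (1 + (1 + δ) * r) := by ring
          _ = (1 + δ) * r ^ j := by rw [hrδ]; ring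
    intro j h1 h2
    exact key (n - j) j (by omega) h1
  have hsum1 : ∑ k ∈ Finset.Icc 1 n, prob k ≤ 1 := by
    rw [Psum 1 le_rfl hn, pow_one, hrδ]
    linarith
  refine ⟨vals, vals', prob, hprob0, hsum1, ?_, ?_, ?_⟩
  -- perturbation
  · intro k hk S
    obtain ⟨hk1, hkn⟩ := Finset.mem_Icc.mp hk
    have hck : (0:ℝ) < c ^ k := pow_pos hc0 k
    rcases S.eq_empty_or_nonempty with rfl | hS
    · simp [setVal_empty]
    · have hv' : setVal (vals' k) S = (1 / ε) * c ^ k := setVal_const _ hS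
      rw [hv']
      by_cases hmem : ∃ i ∈ S, (i : ℕ) + 1 = k
      · obtain ⟨i0, hi0S, hi0⟩ := hmem
        have hvv : setVal (vals k) S = ((1 + ε) / ε) * c ^ k := by
          apply le_antisymm
          · apply setVal_le _ (by positivity)
            intro i hi
            show (if (i : ℕ) + 1 = k then ((1 + ε) / ε) * c ^ k else (1 / ε) * c ^ k) ≤ _
            split
            · exact le_rfl
            · have : 1 / ε ≤ (1 + ε) / ε := by
                rw [div_le_div_iff₀ hε hε]
                nlinarith
              nlinarith
          · have := le_setVal (vals k) hi0S
            have hv : vals k i0 = ((1 + ε) / ε) * c ^ k := by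
              show (if (i0 : ℕ) + 1 = k then _ else _) = _
              rw [if_pos hi0]
            linarith
        rw [hvv]
        constructor
        · have h1 : (1 - ε) * ((1 + ε) / ε) ≤ 1 / ε := by
            rw [show (1 - ε) * ((1 + ε) / ε) = (1 - ε ^ 2) / ε by ring,
              div_le_div_iff₀ hε hε]
            nlinarith [sq_nonneg ε]
          calc (1 - ε) * (((1 + ε) / ε) * c ^ k) = ((1 - ε) * ((1 + ε) / ε)) * c ^ k := by
                ring
            _ ≤ (1 / ε) * c ^ k := mul_le_mul_of_nonneg_right h1 hck.le
        · have h1 : 1 / ε ≤ (1 + ε) * ((1 + ε) / ε) := by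
            rw [show (1 + ε) * ((1 + ε) / ε) = (1 + ε) ^ 2 / ε by ring,
              div_le_div_iff₀ hε hε]
            nlinarith [sq_nonneg ε]
          calc (1 / ε) * c ^ k ≤ ((1 + ε) * ((1 + ε) / ε)) * c ^ k :=
                mul_le_mul_of_nonneg_right h1 hck.le
            _ = (1 + ε) * (((1 + ε) / ε) * c ^ k) := by ring
      · push_neg at hmem
        have hvv : setVal (vals k) S = (1 / ε) * c ^ k := by
          apply le_antisymm
          · apply setVal_le _ (by positivity)
            intro i hi
            show (if (i : ℕ) + 1 = k then _ else _) ≤ _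
            rw [if_neg (hmem i hi)]
          · obtain ⟨i, hi⟩ := hS
            have := le_setVal (vals k) hi
            have hv : vals k i = (1 / ε) * c ^ k := by
              show (if (i : ℕ) + 1 = k then _ else _) = _
              rw [if_neg (hmem i hi)]
            linarith
        rw [hvv]
        have hpos : (0:ℝ) < (1 / ε) * c ^ k := by positivity
        constructor <;> nlinarith
  -- buy-many revenue ≥ n
  · set price : Fin n → ℝ := fun j => c ^ ((j : ℕ) + 1) with hprice_def
    refine ⟨{ℓ : Lottery n | ∃ j : Fin n, ℓ = (pm {j}, price j)},
      fun k => [(pm {idx k}, c ^ k)], ?_, ?_, ?_, ?_, ?_⟩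
    · rintro ℓ ⟨j, rfl⟩
      exact pm_lottery _ _
    · intro k hk ℓ hℓ
      obtain ⟨hk1, hkn⟩ := Finset.mem_Icc.mp hk
      rw [List.mem_singleton] at hℓ
      subst hℓ
      refine ⟨idx k, ?_⟩
      have : price (idx k) = c ^ k := by
        show c ^ ((idx k : ℕ) + 1) = c ^ k
        rw [hidx k hk1 hkn]
      rw [this]
    · intro k hk L hL
      obtain ⟨hk1, hkn⟩ := Finset.mem_Icc.mp hk
      have hck : (0:ℝ) < c ^ k := pow_pos hc0 k
      have hB : (0:ℝ) ≤ (1 / ε) * c ^ k := by positivity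
      have hub := util_bound (vals k) ((1 / ε) * c ^ k) hB price
        (fun j => by positivity)
        (by
          intro j
          show (if (j : ℕ) + 1 = k then ((1 + ε) / ε) * c ^ k else (1 / ε) * c ^ k) ≤
            c ^ ((j : ℕ) + 1) + (1 / ε) * c ^ k
          split
          · rename_i h
            rw [h]
            have : ((1 + ε) / ε) * c ^ k = c ^ k + (1 / ε) * c ^ k := by
              field_simp
              ring
            linarith
          · have : (0:ℝ) < c ^ ((j : ℕ) + 1) := pow_pos hc0 _
            linarith)
        L
        (by
          intro ℓ hℓ
          obtain ⟨j, rfl⟩ := hL ℓ hℓ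
          exact ⟨j, rfl⟩)
        ∅
      have hσ : listUtility (vals k) [((pm {idx k}, c ^ k) : Lottery n)] =
          (1 / ε) * c ^ k := by
        unfold listUtility
        rw [evVal_pm, Finset.empty_union]
        show setVal (vals k) {idx k} - listPrice [((pm {idx k}, c ^ k) : Lottery n)] = _
        rw [setVal_singleton, listPrice_cons, listPrice_nil]
        have hv : vals k (idx k) = ((1 + ε) / ε) * c ^ k := by
          show (if ((idx k : ℕ)) + 1 = k then _ else _) = _
          rw [if_pos (hidx k hk1 hkn)]
        rw [hv]
        show ((1 + ε) / ε) * c ^ k - (c ^ k + 0) = _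
        field_simp
        ring
      rw [hσ]
      unfold listUtility
      rw [setVal_empty] at hub
      rw [max_eq_right hB] at hub
      linarith
    · intro k hk
      obtain ⟨hk1, hkn⟩ := Finset.mem_Icc.mp hk
      have hck : (0:ℝ) < c ^ k := pow_pos hc0 k
      have hσ : listUtility (vals k) [((pm {idx k}, c ^ k) : Lottery n)] =
          (1 / ε) * c ^ k := by
        unfold listUtility
        rw [evVal_pm, Finset.empty_union]
        show setVal (vals k) {idx k} - listPrice [((pm {idx k}, c ^ k) : Lottery n)] = _
        rw [setVal_singleton, listPrice_cons, listPrice_nil]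
        have hv : vals k (idx k) = ((1 + ε) / ε) * c ^ k := by
          show (if ((idx k : ℕ)) + 1 = k then _ else _) = _
          rw [if_pos (hidx k hk1 hkn)]
        rw [hv]
        show ((1 + ε) / ε) * c ^ k - (c ^ k + 0) = _
        field_simp
        ring
      rw [hσ]
      positivity
    · have hcard : ((Finset.Icc 1 n).card : ℝ) = (n : ℝ) := by
        rw [Nat.card_Icc]
        simp
      calc (n : ℝ) = ∑ _k ∈ Finset.Icc 1 n, (1:ℝ) := by
            rw [Finset.sum_const, nsmul_eq_mul, mul_one, hcard]
        _ ≤ ∑ k ∈ Finset.Icc 1 n, prob k * listPrice [((pm {idx k}, c ^ k) : Lottery n)] := by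
            apply Finset.sum_le_sum
            intro k hk
            obtain ⟨hk1, hkn⟩ := Finset.mem_Icc.mp hk
            rw [listPrice_cons, listPrice_nil, add_zero]
            show (1:ℝ) ≤ (if k = n then (1 + δ) * r ^ n else r ^ k) * c ^ k
            have hrc : ∀ m : ℕ, r ^ m * c ^ m = 1 := by
              intro m
              rw [← mul_pow, mul_comm r c, hcr, one_pow]
            split
            · rename_i h
              subst h
              rw [mul_assoc, hrc]
              linarith
            · rw [hrc]
  -- sSup part
  · apply IsGreatest.csSup_eq
    constructor
    · -- membership: posted price (1/ε)*c for everyone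
      refine ⟨fun _ => pm Finset.univ, fun _ => (1 / ε) * c ^ 1, fun k => pm_lottery _ _,
        ?_, ?_, ?_⟩
      · intro k _ k' _
        exact le_rfl
      · intro k hk
        obtain ⟨hk1, hkn⟩ := Finset.mem_Icc.mp hk
        have huniv : (Finset.univ : Finset (Fin n)).Nonempty :=
          ⟨⟨0, by omega⟩, Finset.mem_univ _⟩
        rw [sum_pm_mul]
        have : setVal (vals' k) Finset.univ = (1 / ε) * c ^ k := setVal_const _ huniv
        rw [this]
        have hck : c ^ 1 ≤ c ^ k := pow_le_pow_right₀ hc1.le hk1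
        have h1ε : (0:ℝ) ≤ 1 / ε := by positivity
        have := mul_le_mul_of_nonneg_left hck h1ε
        linarith
      · rw [← Finset.sum_mul, Psum 1 le_rfl hn, pow_one, pow_one]
        have h : (1 + δ) * r * ((1 / ε) * c) = (1 + δ) / ε := by
          calc (1 + δ) * r * ((1 / ε) * c) = ((1 + δ) / ε) * (c * r) := by ring
            _ = (1 + δ) / ε := by rw [hcr, mul_one]
        exact h.symm
    · -- upper bound
      rintro R ⟨x, p, hlot, hIC, hIR, rfl⟩
      set w : ℕ → ℝ := fun k => (1 / ε) * c ^ k with hw_def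
      set q : ℕ → ℝ := fun k =>
        ∑ S : Finset (Fin n), x k S * (if S = (∅ : Finset (Fin n)) then 0 else 1) with hq_def
      have hq1 : ∀ k, q k ≤ 1 := by
        intro k
        calc q k = ∑ S : Finset (Fin n),
                x k S * (if S = (∅ : Finset (Fin n)) then 0 else 1) := by
              simp only [hq_def]
          _ ≤ ∑ S : Finset (Fin n), x k S := by
              apply Finset.sum_le_sum
              intro S _
              by_cases hS : S = ∅
              · subst hS
                rw [if_pos rfl, mul_zero]
                exact (hlot k).1 ∅
              · rw [if_neg hS, mul_one]
          _ = 1 := (hlot k).2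
      have hval : ∀ k (S : Finset (Fin n)),
          setVal (vals' k) S = w k * (if S = (∅ : Finset (Fin n)) then 0 else 1) := by
        intro k S
        rcases S.eq_empty_or_nonempty with rfl | hS
        · rw [setVal_empty, if_pos rfl, mul_zero]
        · rw [setVal_const _ hS, if_neg hS.ne_empty, mul_one]
      have hsum : ∀ k k', ∑ S : Finset (Fin n), x k' S * setVal (vals' k) S =
          w k * q k' := by
        intro k k'
        have hq : q k' = ∑ S : Finset (Fin n),
            x k' S * (if S = (∅ : Finset (Fin n)) then 0 else 1) := by
          simp only [hq_def]
        rw [hq, Finset.mul_sum]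
        apply Finset.sum_congr rfl
        intro S _
        rw [hval k S]
        ring
      have hIC' : ∀ k ∈ Finset.Icc 1 n, ∀ k' ∈ Finset.Icc 1 n,
          w k * q k' - p k' ≤ w k * q k - p k := by
        intro k hk k' hk'
        have := hIC k hk k' hk'
        rwa [hsum k k', hsum k k] at this
      have hIR' : ∀ k ∈ Finset.Icc 1 n, 0 ≤ w k * q k - p k := by
        intro k hk
        have := hIR k hk
        rwa [hsum k k] at this
      set P : ℕ → ℝ := fun j => ∑ k ∈ Finset.Icc j n, prob k with hP_def
      have hP0 : ∀ j, 0 ≤ P j := fun j => Finset.sum_nonneg (fun k _ => hprob0 k)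
      have hPw : ∀ j, 1 ≤ j → j ≤ n → w j * P j = (1 + δ) / ε := by
        intro j h1 h2
        have hrc : r ^ j * c ^ j = 1 := by rw [← mul_pow, mul_comm r c, hcr, one_pow]
        rw [hP_def]
        show (1 / ε) * c ^ j * (∑ k ∈ Finset.Icc j n, prob k) = _
        rw [Psum j h1 h2]
        calc (1 / ε) * c ^ j * ((1 + δ) * r ^ j) = ((1 + δ) / ε) * (r ^ j * c ^ j) := by
              ring
          _ = (1 + δ) / ε := by rw [hrc, mul_one]
      have hsplit : ∀ j, 1 ≤ j → j ≤ n → P j = prob j + P (j + 1) := by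
        intro j _ h2
        show (∑ k ∈ Finset.Icc j n, prob k) = _
        have hins : Finset.Icc j n = insert j (Finset.Icc (j + 1) n) := by
          ext a
          simp only [Finset.mem_Icc, Finset.mem_insert]
          omega
        rw [hins, Finset.sum_insert (by simp only [Finset.mem_Icc]; omega)]
      have main : ∀ m, 1 ≤ m → m ≤ n →
          (∑ k ∈ Finset.Icc 1 m, prob k * p k) + P (m + 1) * p m ≤
            ((1 + δ) / ε) * q m := by
        intro m
        induction m with
        | zero => intro h; omega
        | succ m ih =>
          intro _ hmn
          rcases Nat.eq_zero_or_pos m with rfl | hm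
          · -- base case m+1 = 1
            rw [Finset.Icc_self, Finset.sum_singleton]
            have h1mem : 1 ∈ Finset.Icc 1 n := Finset.mem_Icc.mpr ⟨le_rfl, hn⟩
            have hIR1 := hIR' 1 h1mem
            have hs := hsplit 1 le_rfl hn
            have e0 : prob 1 * p 1 + P 2 * p 1 = P 1 * p 1 := by rw [hs]; ring
            have e1 : P 1 * p 1 ≤ P 1 * (w 1 * q 1) :=
              mul_le_mul_of_nonneg_left (by linarith) (hP0 1)
            have e2 : P 1 * (w 1 * q 1) = (w 1 * P 1) * q 1 := by ring
            have hw1 := hPw 1 le_rfl hn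
            show prob 1 * p 1 + P (1 + 1) * p 1 ≤ _
            rw [hw1] at e2
            calc prob 1 * p 1 + P (1 + 1) * p 1 = P 1 * p 1 := e0
              _ ≤ P 1 * (w 1 * q 1) := e1
              _ = (1 + δ) / ε * q 1 := e2
          · have ihm := ih hm (by omega)
            have hmem : m ∈ Finset.Icc 1 n := Finset.mem_Icc.mpr ⟨hm, by omega⟩
            have hmem1 : m + 1 ∈ Finset.Icc 1 n := Finset.mem_Icc.mpr ⟨by omega, hmn⟩
            have hdecomp : ∑ k ∈ Finset.Icc 1 (m + 1), prob k * p k =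
                (∑ k ∈ Finset.Icc 1 m, prob k * p k) + prob (m + 1) * p (m + 1) := by
              rw [← Finset.sum_Icc_succ_top (by omega : 1 ≤ m + 1)]
            have hs := hsplit (m + 1) (by omega) hmn
            have hICm := hIC' (m + 1) hmem1 m hmem
            have hmul : P (m + 1) * (p (m + 1) - p m) ≤
                P (m + 1) * (w (m + 1) * q (m + 1) - w (m + 1) * q m) :=
              mul_le_mul_of_nonneg_left (by linarith) (hP0 (m + 1))
            have hwP := hPw (m + 1) (by omega) hmn
            have eA : (∑ k ∈ Finset.Icc 1 (m + 1), prob k * p k) + P (m + 2) * p (m + 1) =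
                ((∑ k ∈ Finset.Icc 1 m, prob k * p k) + P (m + 1) * p m) +
                  P (m + 1) * (p (m + 1) - p m) := by
              rw [hdecomp, hs]; ring
            have eB : P (m + 1) * (w (m + 1) * q (m + 1) - w (m + 1) * q m) =
                ((1 + δ) / ε) * q (m + 1) - ((1 + δ) / ε) * q m := by
              rw [← hwP]; ring
            show _ + P (m + 1 + 1) * p (m + 1) ≤ _
            rw [show m + 1 + 1 = m + 2 from rfl]
            calc (∑ k ∈ Finset.Icc 1 (m + 1), prob k * p k) + P (m + 2) * p (m + 1)
                = ((∑ k ∈ Finset.Icc 1 m, prob k * p k) + P (m + 1) * p m) +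
                  P (m + 1) * (p (m + 1) - p m) := eA
              _ ≤ ((1 + δ) / ε) * q m +
                  P (m + 1) * (w (m + 1) * q (m + 1) - w (m + 1) * q m) := by
                  linarith
              _ = ((1 + δ) / ε) * q (m + 1) := by rw [eB]; ring
      have hfin := main n hn le_rfl
      have hPn1 : P (n + 1) = 0 := by
        show (∑ k ∈ Finset.Icc (n + 1) n, prob k) = 0
        rw [Finset.Icc_eq_empty (by omega), Finset.sum_empty]
      rw [hPn1, zero_mul, add_zero] at hfin
      have hW0 : (0:ℝ) ≤ (1 + δ) / ε := by positivity
      calc ∑ k ∈ Finset.Icc 1 n, prob k * p k ≤ ((1 + δ) / ε) * q n := hfin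
        _ ≤ ((1 + δ) / ε) * 1 := mul_le_mul_of_nonneg_left (hq1 n) hW0
        _ = (1 + δ) / ε := mul_one _
end

section
/- In the construction of the previous statement, since the buyer's valuation is subadditive and every lottery (x_j, p_j) with j ≠ i yields strictly negative utility to a type-i buyer, every adaptive buy-many strategy of the type-i buyer that ever purchases a lottery other than (x_i, p_i) is strictly dominated, and the optimal strategy purchases exactly one copy of (x_i, p_i). Consequently, if each type i occurs with probability 1/N, the buy-many revenue of this menu equals (1/(2N))·Σ_{i=1}^N t_i. -/
/-- Utility of a type-`i` unit-demand buyer (value `t i` for any item of `S i`) purchasing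
the list `L` of menu entries, where entry `j` allocates a uniformly random item of `S j`
(a set of size `s = √n`) at price `t j / 2`: the buyer gets value `t i` iff some purchased
item lies in `S i`, which by independence fails with probability
`Π_{j ∈ L} (1 - |S i ∩ S j|/s)`. -/
noncomputable def buyManyUtility (n s N : ℕ) (S : Fin N → Finset (Fin n))
    (t : Fin N → ℝ) (i : Fin N) (L : List (Fin N)) : ℝ :=
  t i * (1 - (L.map (fun j => 1 - ((S i ∩ S j).card : ℝ) / (s : ℝ))).prod)
    - (L.map (fun j => t j / 2)).sum

private lemma prod_mem_Icc' (l : List ℝ) (h : ∀ x ∈ l, 0 ≤ x ∧ x ≤ 1) :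
    0 ≤ l.prod ∧ l.prod ≤ 1 := by
  induction l with
  | nil => simp
  | cons a l ih =>
    have ha := h a (by simp)
    have hl := ih (fun x hx => h x (List.mem_cons_of_mem _ hx))
    simp only [List.prod_cons]
    constructor
    · exact mul_nonneg ha.1 hl.1
    · nlinarith [ha.1, ha.2, hl.1, hl.2]

private lemma union_bound' {ι : Type*} (f : ι → ℝ) (L : List ι)
    (h : ∀ j ∈ L, 0 ≤ f j ∧ f j ≤ 1) :
    1 - (L.map (fun j => 1 - f j)).prod ≤ (L.map f).sum := by
  induction L with
  | nil => simp
  | cons a L ih =>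
    have ha := h a (by simp)
    have hrec := ih (fun x hx => h x (List.mem_cons_of_mem _ hx))
    have hP : 0 ≤ (L.map (fun j => 1 - f j)).prod ∧ (L.map (fun j => 1 - f j)).prod ≤ 1 := by
      apply prod_mem_Icc'
      intro x hx
      simp only [List.mem_map] at hx
      obtain ⟨y, hy, rfl⟩ := hx
      have := h y (List.mem_cons_of_mem _ hy)
      constructor <;> linarith [this.1, this.2]
    simp only [List.map_cons, List.prod_cons, List.sum_cons]
    nlinarith [ha.1, ha.2, hP.1, hP.2]

/-- In the unit-demand lower-bound construction, since the valuation is subadditive and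
every foreign lottery yields strictly negative utility, every multi-purchase strategy is
(weakly) dominated by buying a single copy of the own entry `(x_i, p_i)`, strictly so if it
ever buys a foreign entry; consequently, with each type having probability `1/N`, the
buy-many revenue of the menu equals `(1/(2N)) Σ_i t_i`. -/
theorem stmt_13 (n s q N : ℕ) (hq : q * q = s) (hs : s * s = n) (hq1 : 1 ≤ q)
    (hN : 0 < N)
    (S : Fin N → Finset (Fin n)) (hcard : ∀ i, (S i).card = s)
    (hint : ∀ i j, i ≠ j → (S i ∩ S j).card ≤ q)
    (t : Fin N → ℝ) (ht : ∀ i, t i ∈ Set.Icc (1 : ℝ) ((q : ℝ) / 3)) :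
    (∀ i : Fin N, ∀ L : List (Fin N),
        buyManyUtility n s N S t i L ≤ buyManyUtility n s N S t i [i]) ∧
    (∀ i : Fin N, ∀ L : List (Fin N), (∃ j ∈ L, j ≠ i) →
        buyManyUtility n s N S t i L < buyManyUtility n s N S t i [i]) ∧
    (1 / (N : ℝ)) * ∑ i, t i / 2 = (1 / (2 * (N : ℝ))) * ∑ i, t i := by
  have hs0 : 0 < s := by nlinarith
  have hsR : (0 : ℝ) < (s : ℝ) := by exact_mod_cast hs0
  have hqR : (1 : ℝ) ≤ (q : ℝ) := by exact_mod_cast hq1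
  have hqqs : (q : ℝ) * (q : ℝ) = (s : ℝ) := by exact_mod_cast hq
  -- Utility of buying exactly one own copy.
  have hsingle : ∀ i, buyManyUtility n s N S t i [i] = t i / 2 := by
    intro i
    unfold buyManyUtility
    simp only [List.map_cons, List.map_nil, List.prod_cons, List.prod_nil,
      List.sum_cons, List.sum_nil, Finset.inter_self, hcard i]
    rw [div_self hsR.ne']
    ring
  -- Main bound.
  have hmain : ∀ (i : Fin N) (L : List (Fin N)),
      buyManyUtility n s N S t i L ≤ t i / 2 ∧
      ((∃ j ∈ L, j ≠ i) → buyManyUtility n s N S t i L < t i / 2) := by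
    intro i L
    have hti1 : (1 : ℝ) ≤ t i := (ht i).1
    have hti2 : t i ≤ (q : ℝ) / 3 := (ht i).2
    by_cases hi : i ∈ L
    · -- `L` contains the own entry: the product vanishes, utility is
      -- `t i / 2` minus the (nonnegative) prices of all other entries.
      obtain ⟨L₁, L₂, rfl⟩ := List.append_of_mem hi
      have hprod : ((L₁ ++ i :: L₂).map
          (fun j => 1 - ((S i ∩ S j).card : ℝ) / (s : ℝ))).prod = 0 := by
        simp [List.map_append, List.prod_append, Finset.inter_self, hcard i,
          div_self hsR.ne']
      have hprice : ∀ (M : List (Fin N)), ∀ x ∈ M.map (fun j => t j / 2), (0:ℝ) ≤ x := by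
        intro M x hx
        simp only [List.mem_map] at hx
        obtain ⟨y, hy, rfl⟩ := hx
        linarith [(ht y).1]
      have h1 : (0:ℝ) ≤ (L₁.map (fun j => t j / 2)).sum := List.sum_nonneg (hprice L₁)
      have h2 : (0:ℝ) ≤ (L₂.map (fun j => t j / 2)).sum := List.sum_nonneg (hprice L₂)
      have huval : buyManyUtility n s N S t i (L₁ ++ i :: L₂)
          = t i / 2 - (L₁.map (fun j => t j / 2)).sum - (L₂.map (fun j => t j / 2)).sum := by
        unfold buyManyUtility
        rw [hprod]
        simp only [List.map_append, List.map_cons, List.sum_append, List.sum_cons]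
        ring
      constructor
      · rw [huval]; linarith
      · rintro ⟨j, hj, hji⟩
        have hjm : j ∈ L₁ ∨ j ∈ L₂ := by
          rcases List.mem_append.mp hj with h | h
          · exact Or.inl h
          · rcases List.mem_cons.mp h with h | h
            · exact absurd h hji
            · exact Or.inr h
        have hjt : (1:ℝ)/2 ≤ t j / 2 := by linarith [(ht j).1]
        rcases hjm with h | h
        · have : t j / 2 ≤ (L₁.map (fun j => t j / 2)).sum :=
            List.single_le_sum (hprice L₁) _ (List.mem_map_of_mem (f := fun j => t j / 2) h)
          rw [huval]; linarith
        · have : t j / 2 ≤ (L₂.map (fun j => t j / 2)).sum :=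
            List.single_le_sum (hprice L₂) _ (List.mem_map_of_mem (f := fun j => t j / 2) h)
          rw [huval]; linarith
    · -- `L` contains only foreign entries: every entry contributes
      -- at most `1/3` in value but costs at least `1/2`.
      set f : Fin N → ℝ := fun j => ((S i ∩ S j).card : ℝ) / (s : ℝ) with hf
      have hfb : ∀ j ∈ L, 0 ≤ f j ∧ f j ≤ 1 := by
        intro j hj
        constructor
        · exact div_nonneg (Nat.cast_nonneg _) hsR.le
        · rw [div_le_one hsR]
          have : (S i ∩ S j).card ≤ (S j).card :=
            Finset.card_le_card (Finset.inter_subset_right)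
          rw [hcard j] at this
          exact_mod_cast this
      have hub : 1 - (L.map (fun j => 1 - f j)).prod ≤ (L.map f).sum := union_bound' f L hfb
      have hsum : (L.map (fun j => t i * f j)).sum ≤ (L.map (fun j => t j / 2)).sum := by
        apply List.sum_le_sum
        intro j hj
        have hji : j ≠ i := fun h => hi (h ▸ hj)
        have hcq : ((S i ∩ S j).card : ℝ) ≤ (q : ℝ) := by
          exact_mod_cast hint i j (Ne.symm hji)
        have hfle : f j ≤ (q : ℝ) / (s : ℝ) :=
          div_le_div_of_nonneg_right hcq hsR.le |>.trans_eq rfl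
        have hfnn : 0 ≤ f j := (hfb j hj).1
        have : t i * f j ≤ ((q : ℝ) / 3) * ((q : ℝ) / (s : ℝ)) := by
          apply mul_le_mul hti2 hfle hfnn (by linarith)
        have heq : ((q : ℝ) / 3) * ((q : ℝ) / (s : ℝ)) = 1 / 3 := by
          field_simp
          linarith [hqqs]
        rw [heq] at this
        linarith [(ht j).1]
      have hmul : t i * (1 - (L.map (fun j => 1 - f j)).prod) ≤ (L.map (fun j => t i * f j)).sum := by
        rw [List.sum_map_mul_left]
        have hnn : (0:ℝ) ≤ t i := by linarith
        nlinarith [mul_le_mul_of_nonneg_left hub hnn]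
      have hle : buyManyUtility n s N S t i L ≤ 0 := by
        unfold buyManyUtility
        have : (L.map (fun j => 1 - ((S i ∩ S j).card : ℝ) / (s : ℝ))).prod
            = (L.map (fun j => 1 - f j)).prod := rfl
        rw [this]
        linarith
      have hhalf : (0:ℝ) < t i / 2 := by linarith
      exact ⟨by linarith, fun _ => by linarith⟩
  refine ⟨fun i L => by rw [hsingle i]; exact (hmain i L).1,
    fun i L h => by rw [hsingle i]; exact (hmain i L).2 h, ?_⟩
  rw [← Finset.sum_div]
  ring
end

section
/- Fix δ ∈ (0,1) and α = √δ. Suppose real numbers satisfy: (1) x'·v − p' ≥ x·v − p, and (2) x·v − (1−α)p ≥ x'·v − (1+δ)(1−α)p', with p, p' ≥ 0. Then p ≥ (1 + δ − δ/α)·p' = (1 + δ − √δ)·p', and consequently (1−α)p ≥ (1 − 2√δ)·p'. -/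
/-- Arithmetic core of the discretization step: with `α = √δ`, from
`x'·v - p' ≥ x·v - p` and `x·v - (1-α)p ≥ x'·v - (1+δ)(1-α)p'` one gets
`p ≥ (1 + δ - δ/α)p' = (1 + δ - √δ)p'`, hence `(1-α)p ≥ (1 - 2√δ)p'`. -/
theorem stmt_15 (δ xv x'v p p' : ℝ) (hδ : δ ∈ Set.Ioo (0 : ℝ) 1)
    (h1 : x'v - p' ≥ xv - p)
    (h2 : xv - (1 - Real.sqrt δ) * p ≥ x'v - (1 + δ) * (1 - Real.sqrt δ) * p')
    (hp : 0 ≤ p) (hp' : 0 ≤ p') :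
    p ≥ (1 + δ - δ / Real.sqrt δ) * p' ∧
    (1 + δ - δ / Real.sqrt δ) * p' = (1 + δ - Real.sqrt δ) * p' ∧
    (1 - Real.sqrt δ) * p ≥ (1 - 2 * Real.sqrt δ) * p' := by
  obtain ⟨h0, h1'⟩ := hδ
  have hα : 0 < Real.sqrt δ := Real.sqrt_pos.mpr h0
  have hs : Real.sqrt δ * Real.sqrt δ = δ := Real.mul_self_sqrt h0.le
  have heq : δ / Real.sqrt δ = Real.sqrt δ := by
    field_simp
    rw [sq, hs]
  have hα1 : Real.sqrt δ < 1 := by nlinarith [hs]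
  have hkey : p ≥ (1 + δ - Real.sqrt δ) * p' := by nlinarith [hs, hα, h1, h2]
  refine ⟨by rw [heq]; exact hkey, by rw [heq], ?_⟩
  nlinarith [hs, hα, hα1, hkey, mul_nonneg h0.le hp']
end
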